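/- Let R be a commutative ring and M a semisimple R-module. If M is Rad-supplementing, then M is pure-injective. -/

import Mathlib

universe u v

/-- The radical of a module: the intersection of all maximal submodules. -/
def moduleRad (R : Type u) [Ring R] (M : Type v) [AddCommGroup M] [Module R M] :
    Submodule R M :=
  sInf {m : Submodule R M | IsCoatom m}

/-- `V` is a Rad-supplement of `U` in the ambient module: `U + V = ⊤` and
`U ⊓ V ≤ Rad V` (viewed inside the ambient module). -/
def IsRadSupplementOf (R : Type u) [Ring R] {N : Type v} [AddCommGroup N] [Module R N]
    (U V : Submodule R N) : Prop :=
  U ⊔ V = ⊤ ∧ U ⊓ V ≤ Submodule.map V.subtype (moduleRad R V)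

/-- `M` is Rad-supplementing: in every module containing it (i.e. every embedding into a
module `N`), its image has a Rad-supplement. -/
def IsRadSupplementing (R : Type u) [Ring R] (M : Type v) [AddCommGroup M] [Module R M] :
    Prop :=
  ∀ (N : ModuleCat.{v} R) (f : M →ₗ[R] N), Function.Injective f →
    ∃ V : Submodule R N, IsRadSupplementOf R (LinearMap.range f) V

/-- `M` is pure-injective: its image is a direct summand in every pure extension,
where an embedding `f : M → N` is pure if `Q ⊗ f` is injective for every module `Q`. -/
def IsPureInjective (R : Type u) [CommRing R] (M : Type v) [AddCommGroup M]
    [Module R M] : Prop :=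
  ∀ (N : ModuleCat.{v} R) (f : M →ₗ[R] N), Function.Injective f →
    (∀ (Q : ModuleCat.{v} R), Function.Injective (LinearMap.lTensor (Q : Type v) f)) →
    ∃ W : Submodule R N, IsCompl (LinearMap.range f) W

open Submodule
open scoped TensorProduct

lemma exists_maximal_avoiding' {R : Type u} [Ring R] {N : Type v} [AddCommGroup N] [Module R N]
    (K : Submodule R N) (x : N) (hx : x ∉ K) :
    ∃ P : Submodule R N, K ≤ P ∧ x ∉ P ∧ ∀ Q : Submodule R N, K ≤ Q → x ∉ Q → P ≤ Q → Q = P := by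
  obtain ⟨P, hKP, hPs, hPmax⟩ := zorn_le_nonempty₀ {P : Submodule R N | K ≤ P ∧ x ∉ P}
    (fun c hcs hc y hy => by
      refine ⟨sSup c, ⟨le_trans (hcs hy).1 (le_sSup hy), ?_⟩, fun z hz => le_sSup hz⟩
      rw [Submodule.mem_sSup_of_directed ⟨y, hy⟩ hc.directedOn]
      rintro ⟨z, hzc, hxz⟩
      exact (hcs hzc).2 hxz) K ⟨le_rfl, hx⟩
  exact ⟨P, hPs.1, hPs.2, fun Q hKQ hxQ hPQ => le_antisymm (hPmax ⟨hKQ, hxQ⟩ hPQ) hPQ⟩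

section Ring
variable {R : Type u} [Ring R] {N : Type v} [AddCommGroup N] [Module R N]

/-- If `P` is a coatom of `N` not containing `V`, then `V ⊓ P` is a coatom of `V`. -/
lemma isCoatom_comap_subtype {V P : Submodule R N} (hP : IsCoatom P) (hVP : ¬ V ≤ P) :
    IsCoatom (P.comap V.subtype) := by
  constructor
  · exact fun h => hVP (comap_subtype_eq_top.mp h)
  · intro W hW
    obtain ⟨w, hwW, hwP⟩ := SetLike.exists_of_lt hW
    have hsup : P ⊔ Submodule.map V.subtype W = ⊤ := by
      refine hP.2 _ (lt_of_le_of_ne le_sup_left fun h => hwP ?_)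
      show (w : N) ∈ P
      rw [h]
      exact mem_sup_right ⟨w, hwW, rfl⟩
    rw [eq_top_iff]
    intro v _
    have : (v : N) ∈ P ⊔ Submodule.map V.subtype W := hsup ▸ mem_top
    obtain ⟨p, hp, q, ⟨w', hw', rfl⟩, hpq⟩ := mem_sup.mp this
    have hvw : v - w' ∈ P.comap V.subtype := by
      have : ((v - w' : V) : N) = p := by
        rw [Submodule.subtype_apply] at hpq
        push_cast
        rw [← hpq, add_sub_cancel_right]
      simpa [Submodule.mem_comap, this] using hp
    have : v - w' ∈ W := le_of_lt hW hvw
    simpa using add_mem this hw'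

/-- The radical of a submodule maps into the radical of the ambient module. -/
lemma map_moduleRad_le (V : Submodule R N) :
    Submodule.map V.subtype (moduleRad R V) ≤ moduleRad R N := by
  rintro _ ⟨v, hv, rfl⟩
  rw [moduleRad, Submodule.mem_sInf]
  intro P hP
  by_cases hVP : V ≤ P
  · exact hVP v.2
  · have hv' : v ∈ sInf {m : Submodule R ↥V | IsCoatom m} := hv
    rw [Submodule.mem_sInf] at hv'
    exact hv' _ (isCoatom_comap_subtype hP hVP)

end Ring

/-- In a semisimple module, every nonzero element avoids some maximal submodule. -/
lemma exists_coatom_not_mem {R : Type u} [Ring R] {M : Type v} [AddCommGroup M] [Module R M]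
    [IsSemisimpleModule R M] {x : M} (hx : x ≠ 0) :
    ∃ m : Submodule R M, IsCoatom m ∧ x ∉ m := by
  obtain ⟨P, -, hxP, hPmax⟩ := exists_maximal_avoiding' (⊥ : Submodule R M) x
    (by simpa using hx)
  refine ⟨P, ⟨fun h => hxP (h ▸ mem_top), fun Q hPQ => ?_⟩, hxP⟩
  by_contra hQ
  obtain ⟨C, hC⟩ := exists_isCompl Q
  have hCbot : C ≠ ⊥ := by
    intro h
    exact hQ (by simpa [h] using hC.codisjoint.eq_top)
  have hxQ : x ∈ Q := by
    by_contra hxQ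
    exact hPQ.ne' (hPmax Q bot_le hxQ hPQ.le)
  have hCP : ¬ C ≤ P := by
    intro h
    exact hCbot (le_bot_iff.mp ((le_inf (h.trans hPQ.le) le_rfl).trans hC.disjoint.le_bot))
  have hxPC : x ∈ P ⊔ C := by
    by_contra hxPC
    have := hPmax (P ⊔ C) bot_le hxPC le_sup_left
    exact hCP (le_sup_right.trans this.le)
  have : x ∈ P := by
    have h1 : x ∈ (P ⊔ C) ⊓ Q := ⟨hxPC, hxQ⟩
    rw [sup_inf_assoc_of_le C hPQ.le, inf_comm C Q, hC.disjoint.eq_bot, sup_bot_eq] at h1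
    exact h1
  exact hxP this

lemma not_mem_moduleRad_of_pure {R : Type u} [CommRing R] {M : Type v} [AddCommGroup M]
    [Module R M] {N : Type v} [AddCommGroup N] [Module R N] (f : M →ₗ[R] N)
    {m : Submodule R M} (hm : IsCoatom m) {x : M} (hx : x ∉ m)
    (hpure : Function.Injective (LinearMap.lTensor (M ⧸ m) f)) :
    f x ∉ moduleRad R N := by
  classical
  set z : M ⧸ m := Submodule.Quotient.mk x with hzdef
  have hz : z ≠ 0 := by simpa [hzdef, Submodule.Quotient.mk_eq_zero] using hx
  haveI : IsSimpleModule R (M ⧸ m) := isSimpleModule_iff_isCoatom.mpr hm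
  have hspan : ∀ w : M ⧸ m, w ≠ 0 → Submodule.span R {w} = ⊤ := by
    intro w hw
    rcases eq_bot_or_eq_top (Submodule.span R {w}) with h | h
    · exact absurd (Submodule.span_singleton_eq_bot.mp h) hw
    · exact h
  set φ := LinearMap.toSpanSingleton R (M ⧸ m) z with hφdef
  have hφsurj : Function.Surjective φ := by
    rw [← LinearMap.range_eq_top, ← LinearMap.span_singleton_eq_range]
    exact hspan z hz
  set I := LinearMap.ker φ with hIdef
  have hsmul_mem : ∀ r ∈ I, ∀ y : M, r • y ∈ m := by
    intro r hr y
    have h0 : φ r = 0 := hr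
    obtain ⟨t, ht⟩ := hφsurj (Submodule.Quotient.mk y : M ⧸ m)
    have hcalc : (Submodule.Quotient.mk (r • y) : M ⧸ m) = 0 := by
      calc (Submodule.Quotient.mk (r • y) : M ⧸ m)
          = r • (Submodule.Quotient.mk y : M ⧸ m) := by rw [Submodule.Quotient.mk_smul]
        _ = r • (t • z) := by rw [← ht, hφdef, LinearMap.toSpanSingleton_apply]
        _ = t • (r • z) := smul_comm r t z
        _ = t • φ r := by rw [hφdef, LinearMap.toSpanSingleton_apply]
        _ = 0 := by rw [h0, smul_zero]
    exact (Submodule.Quotient.mk_eq_zero m).mp hcalc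
  have hinv : ∀ r : R, r ∉ I → ∃ s : R, 1 - s * r ∈ I := by
    intro r hr
    have hφr : φ r ≠ 0 := fun h => hr (LinearMap.mem_ker.mpr h)
    have hzmem : z ∈ Submodule.span R {φ r} := (hspan _ hφr) ▸ mem_top
    obtain ⟨s, hs⟩ := Submodule.mem_span_singleton.mp hzmem
    refine ⟨s, LinearMap.mem_ker.mpr ?_⟩
    have h1 : φ 1 = z := LinearMap.toSpanSingleton_apply_one R (M ⧸ m) z
    have h2 : φ (s * r) = z := by
      rw [hφdef, LinearMap.toSpanSingleton_apply, mul_smul,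
        ← LinearMap.toSpanSingleton_apply R (M ⧸ m) z r]
      exact hs
    rw [map_sub, h1, h2, sub_self]
  have hsmul_le : I • (⊤ : Submodule R M) ≤ m :=
    Submodule.smul_le.mpr (fun r hr y _ => hsmul_mem r hr y)
  have hker : ∀ w : M, f w ∈ I • (⊤ : Submodule R N) → w ∈ m := by
    intro w hw
    have hzero : ∀ n ∈ I • (⊤ : Submodule R N), (z ⊗ₜ[R] n : (M ⧸ m) ⊗[R] N) = 0 := by
      intro n hn
      refine Submodule.smul_induction_on hn (fun r hr n' _ => ?_) (fun a b ha hb => ?_)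
      · have hrz : r • z = 0 := by
          have : φ r = 0 := hr
          rwa [hφdef, LinearMap.toSpanSingleton_apply] at this
        rw [TensorProduct.tmul_smul, TensorProduct.smul_tmul', hrz,
          TensorProduct.zero_tmul]
      · rw [TensorProduct.tmul_add, ha, hb, add_zero]
    have h1 : (z ⊗ₜ[R] f w : (M ⧸ m) ⊗[R] N) = 0 := hzero _ hw
    have h3 : (z ⊗ₜ[R] w : (M ⧸ m) ⊗[R] M) = 0 := by
      apply hpure
      rw [map_zero, LinearMap.lTensor_tmul]
      exact h1
    set e := φ.quotKerEquivOfSurjective hφsurj with hedef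
    have heall : ∀ r : R, e (Submodule.Quotient.mk r) = φ r := by
      intro r
      simp only [hedef, LinearMap.quotKerEquivOfSurjective, LinearEquiv.trans_apply,
        LinearEquiv.ofTop_apply]
      exact φ.quotKerEquivRange_apply_mk r
    have he : e (Ideal.Quotient.mk I 1) = z := by
      show e (Submodule.Quotient.mk 1) = z
      rw [heall 1, hφdef, LinearMap.toSpanSingleton_apply_one]
    have h4 : ((Ideal.Quotient.mk I 1) ⊗ₜ[R] w : (R ⧸ I) ⊗[R] M) = 0 := by
      apply (TensorProduct.congr e (LinearEquiv.refl R M)).injective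
      rw [map_zero, TensorProduct.congr_tmul, he, LinearEquiv.refl_apply]
      exact h3
    have h5 := congrArg (TensorProduct.quotTensorEquivQuotSMul M I) h4
    rw [TensorProduct.quotTensorEquivQuotSMul_mk_tmul, map_zero, one_smul] at h5
    exact hsmul_le ((Submodule.Quotient.mk_eq_zero _).mp h5)
  intro hrad
  set K := I • (⊤ : Submodule R N) ⊔ Submodule.map f m with hK
  have hfxK : f x ∉ K := by
    intro hmem
    obtain ⟨n, hn, w, ⟨y, hy, rfl⟩, hsum⟩ := Submodule.mem_sup.mp hmem
    have hfxy : f (x - y) ∈ I • (⊤ : Submodule R N) := by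
      rw [map_sub]
      have : f x - f y = n := by rw [← hsum]; abel
      rw [this]; exact hn
    have hxy : x - y ∈ m := hker _ hfxy
    exact hx (by simpa using add_mem hxy hy)
  obtain ⟨P, hKP, hfxP, hPmax⟩ := exists_maximal_avoiding' K (f x) hfxK
  have hPco : IsCoatom P := by
    constructor
    · exact fun h => hfxP (h ▸ mem_top)
    · intro Q hPQ
      have hfxQ : f x ∈ Q := by
        by_contra hq
        exact hPQ.ne' (hPmax Q (hKP.trans hPQ.le) hq hPQ.le)
      rw [eq_top_iff]
      intro n _
      by_cases hn : n ∈ P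
      · exact hPQ.le hn
      · have hfx2 : f x ∈ P ⊔ Submodule.span R {n} := by
          by_contra hc
          have heq := hPmax _ (hKP.trans le_sup_left) hc le_sup_left
          exact hn (heq ▸ (mem_sup_right (Submodule.mem_span_singleton_self n)))
        obtain ⟨p, hp, c, hc, hsum⟩ := Submodule.mem_sup.mp hfx2
        obtain ⟨r, rfl⟩ := Submodule.mem_span_singleton.mp hc
        by_cases hrI : r ∈ I
        · refine absurd ?_ hfxP
          rw [← hsum]
          exact add_mem hp (hKP ((le_sup_left : I • (⊤ : Submodule R N) ≤ K)
            (Submodule.smul_mem_smul hrI mem_top)))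
        · obtain ⟨s, hs⟩ := hinv r hrI
          have hn1 : (1 - s * r) • n ∈ P :=
            hKP ((le_sup_left : I • (⊤ : Submodule R N) ≤ K)
              (Submodule.smul_mem_smul hs mem_top))
          have hn2 : (s * r) • n ∈ Q := by
            have hrn : r • n = f x - p := eq_sub_of_add_eq' hsum
            rw [mul_smul, hrn]
            exact Submodule.smul_mem _ s (sub_mem hfxQ (hPQ.le hp))
          have h6 : s * r + (1 - s * r) = 1 := by ring
          have h7 : (s * r) • n + (1 - s * r) • n = n := by
            rw [← add_smul, h6, one_smul]
          rw [← h7]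
          exact add_mem hn2 (hPQ.le hn1)
  exact hfxP ((sInf_le hPco : moduleRad R N ≤ P) hrad)

/-- Over a commutative ring, a semisimple Rad-supplementing module is pure-injective. -/
theorem pureInjective_of_semisimple_radSupplementing
    (R : Type u) [CommRing R] (M : Type v) [AddCommGroup M] [Module R M]
    [IsSemisimpleModule R M] (h : IsRadSupplementing R M) :
    IsPureInjective R M := by
  intro N f hf hpure
  obtain ⟨V, hsup, hle⟩ := h N f hf
  refine ⟨V, ?_, codisjoint_iff.mpr hsup⟩
  rw [Submodule.disjoint_def]
  intro y hy1 hy2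
  obtain ⟨x, rfl⟩ := hy1
  by_cases hx : x = 0
  · rw [hx, map_zero]
  · exfalso
    obtain ⟨m, hm, hxm⟩ := exists_coatom_not_mem (R := R) hx
    have hrad : f x ∈ moduleRad R N :=
      map_moduleRad_le V (hle ⟨⟨x, rfl⟩, hy2⟩)
    exact not_mem_moduleRad_of_pure f hm hxm (hpure (ModuleCat.of R (M ⧸ m))) hrad
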